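/- arXiv:2010.02388 — 3 statements merged into one kernel-verified Lean document; each statement's English description precedes it below -/
import Mathlib

section
/- Let G be a graph and π a layout of G of width lw(G). Define X_i = mid(π_{≤ i−1}) ∪ π(i) for 1 ≤ i ≤ m, where π(i) is interpreted as its set of endpoints. Then the sequence (X_1, …, X_m) is a path decomposition of G. -/
variable {V : Type*} [Fintype V] [DecidableEq V]

/-- `Vs F` is the set of endpoints of edges in `F`. -/
def Vs (F : Finset (Sym2 V)) : Finset V :=
  Finset.univ.filter (fun v => ∃ e ∈ F, v ∈ e)

/-- The set of endpoints of a single edge. -/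
def eset (e : Sym2 V) : Finset V := Finset.univ.filter (fun v => v ∈ e)

/-- `mids E F` is mid(F) = V(F) ∩ V(E \ F), relative to the edge set `E`. -/
def mids (E F : Finset (Sym2 V)) : Finset V := Vs F ∩ Vs (E \ F)

/-- `dd E F` is d(F) = |mid(F)|, relative to the edge set `E`. -/
def dd (E F : Finset (Sym2 V)) : ℕ := (mids E F).card

/-- A layout of the edge set `E`: a duplicate-free list enumerating `E`
(equivalently, a bijection {1,…,m} → E). -/
def IsLayout (E : Finset (Sym2 V)) (L : List (Sym2 V)) : Prop :=
  L.Nodup ∧ L.toFinset = E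

/-- The (partial) layout `L` has width at most `k` w.r.t. the edge set `E`:
every prefix `π_{≤ i}` satisfies d(π_{≤ i}) ≤ k. -/
def WidthLE (E : Finset (Sym2 V)) (L : List (Sym2 V)) (k : ℕ) : Prop :=
  ∀ i, dd E (L.take i).toFinset ≤ k

/-- The linearwidth of the edge set `E`: the minimum width of a layout of `E`. -/
noncomputable def lw (E : Finset (Sym2 V)) : ℕ :=
  sInf {k | ∃ L, IsLayout E L ∧ WidthLE E L k}

/-- The number of edges of `S` incident to `u`. -/
def degIn (S : Finset (Sym2 V)) (u : V) : ℕ := (S.filter (fun e => u ∈ e)).card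

/-- `X` is a path decomposition of `G`, given as a list of bags. -/
def IsPD (G : SimpleGraph V) (X : List (Finset V)) : Prop :=
  (∀ v : V, ∃ B ∈ X, v ∈ B) ∧
  (∀ e ∈ G.edgeSet, ∃ B ∈ X, eset e ⊆ B) ∧
  (∀ v : V, ∀ i j l : ℕ, i ≤ j → j ≤ l → l < X.length →
    v ∈ X.getD i ∅ → v ∈ X.getD l ∅ → v ∈ X.getD j ∅)

/-- The pathwidth of `G`: the minimum over path decompositions of (max bag size) − 1. -/
noncomputable def pw (G : SimpleGraph V) : ℕ :=
  sInf {k | ∃ X, IsPD G X ∧ ∀ B ∈ X, B.card ≤ k + 1}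

/-- The closure F* of `F` in `E`: all edges of `E` with both endpoints in `V(F)`. -/
def cl (E F : Finset (Sym2 V)) : Finset (Sym2 V) := E.filter (fun e => eset e ⊆ Vs F)

/-- A partial layout `S` is `k`-extendable: it is a prefix of some layout
of `E` of width at most `k`. -/
def Extendable (E : Finset (Sym2 V)) (k : ℕ) (S : List (Sym2 V)) : Prop :=
  ∃ L, IsLayout E L ∧ WidthLE E L k ∧ S <+: L


lemma mem_Vs {F : Finset (Sym2 V)} {v : V} : v ∈ Vs F ↔ ∃ e ∈ F, v ∈ e := by
  simp [Vs]

lemma mem_eset {e : Sym2 V} {v : V} : v ∈ eset e ↔ v ∈ e := by simp [eset]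

/-- From an optimal layout π, the bags X_i = mid(π_{≤ i−1}) ∪ endpoints(π(i))
form a path decomposition of G (G has no isolated vertices). -/
theorem stmt6 (G : SimpleGraph V) [DecidableRel G.Adj]
    (hiso : ∀ v : V, 0 < G.degree v)
    (L : List (Sym2 V)) (hL : IsLayout G.edgeFinset L)
    (hw : WidthLE G.edgeFinset L (lw G.edgeFinset)) :
    IsPD G (List.ofFn (fun i : Fin L.length =>
      mids G.edgeFinset (L.take i).toFinset ∪ eset (L.get i))) := by
  obtain ⟨hnd, hto⟩ := hL
  set f : Fin L.length → Finset V := fun i =>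
    mids G.edgeFinset (L.take i).toFinset ∪ eset (L.get i) with hf
  -- every edge of G appears at some index
  have hedge : ∀ e ∈ G.edgeFinset, ∃ i : Fin L.length, L.get i = e := by
    intro e he
    rw [← hto, List.mem_toFinset] at he
    exact List.get_of_mem he
  have hbag : ∀ i : Fin L.length, eset (L.get i) ⊆ f i := fun i =>
    Finset.subset_union_right
  refine ⟨?_, ?_, ?_⟩
  · intro v
    obtain ⟨u, hu⟩ := Finset.card_pos.mp (hiso v)
    rw [SimpleGraph.mem_neighborFinset] at hu
    obtain ⟨i, hi⟩ := hedge s(v, u) (by simpa using hu)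
    exact ⟨f i, List.mem_ofFn.mpr ⟨i, rfl⟩, hbag i (mem_eset.mpr (by rw [List.get_eq_getElem] at hi; simp [hi]))⟩
  · intro e he
    obtain ⟨i, hi⟩ := hedge e (SimpleGraph.mem_edgeFinset.mpr he)
    exact ⟨f i, List.mem_ofFn.mpr ⟨i, rfl⟩, hi ▸ hbag i⟩
  · intro v i j l hij hjl hl hvi hvl
    rw [List.length_ofFn] at hl
    have hi : i < L.length := lt_of_le_of_lt (hij.trans hjl) hl
    have hj : j < L.length := lt_of_le_of_lt hjl hl
    have getb : ∀ (a : ℕ) (ha : a < L.length),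
        (List.ofFn f).getD a ∅ = f ⟨a, ha⟩ := by
      intro a ha
      rw [List.getD_eq_getElem _ _ (by simpa using ha), List.getElem_ofFn]
    rw [getb i hi] at hvi
    rw [getb l hl] at hvl
    rw [getb j hj]
    -- v is an endpoint of some edge at index a ≤ i
    have hA : ∃ a : Fin L.length, a.1 ≤ i ∧ v ∈ L.get a := by
      rcases Finset.mem_union.mp hvi with h | h
      · obtain ⟨e, he, hv⟩ := mem_Vs.mp (Finset.mem_inter.mp h).1
        rw [List.mem_toFinset, List.mem_take_iff_getElem] at he
        obtain ⟨a, ha, hae⟩ := he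
        exact ⟨⟨a, lt_of_lt_of_le ha (min_le_right _ _)⟩,
          le_of_lt (lt_of_lt_of_le ha (min_le_left _ _)), by simpa [hae] using hv⟩
      · exact ⟨⟨i, hi⟩, le_rfl, mem_eset.mp h⟩
    -- v is an endpoint of some edge at index b ≥ l
    have hB : ∃ b : Fin L.length, l ≤ b.1 ∧ v ∈ L.get b := by
      rcases Finset.mem_union.mp hvl with h | h
      · obtain ⟨e, he, hv⟩ := mem_Vs.mp (Finset.mem_inter.mp h).2
        obtain ⟨heE, heT⟩ := Finset.mem_sdiff.mp he
        obtain ⟨b, hb⟩ := hedge e heE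
        refine ⟨b, ?_, by rw [List.get_eq_getElem] at hb; simpa [hb] using hv⟩
        by_contra hlt
        push_neg at hlt
        exact heT (List.mem_toFinset.mpr (List.mem_take_iff_getElem.mpr
          ⟨b.1, by simp [hlt, b.2], hb⟩))
      · exact ⟨⟨l, hl⟩, le_rfl, mem_eset.mp h⟩
    obtain ⟨a, hai, hav⟩ := hA
    obtain ⟨b, hlb, hbv⟩ := hB
    by_cases haj : a.1 = j
    · refine Finset.mem_union_right _ (mem_eset.mpr ?_)
      have : L.get a = L.get ⟨j, hj⟩ := by congr 1; exact Fin.ext haj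
      rwa [this] at hav
    by_cases hbj : b.1 = j
    · refine Finset.mem_union_right _ (mem_eset.mpr ?_)
      have : L.get b = L.get ⟨j, hj⟩ := by congr 1; exact Fin.ext hbj
      rwa [this] at hbv
    have haj' : a.1 < j := lt_of_le_of_ne (hai.trans hij) haj
    have hbj' : j < b.1 := lt_of_le_of_ne (hjl.trans hlb) (fun h => hbj h.symm)
    refine Finset.mem_union_left _ (Finset.mem_inter.mpr ⟨?_, ?_⟩)
    · refine mem_Vs.mpr ⟨L.get a, List.mem_toFinset.mpr ?_, hav⟩
      exact List.mem_take_iff_getElem.mpr ⟨a.1, by simp [haj', a.2], rfl⟩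
    · refine mem_Vs.mpr ⟨L.get b, Finset.mem_sdiff.mpr ⟨?_, ?_⟩, hbv⟩
      · rw [← hto]; exact List.mem_toFinset.mpr (L.get_mem b)
      · intro hmem
        rw [List.mem_toFinset, List.mem_take_iff_getElem] at hmem
        obtain ⟨c, hc, hcb⟩ := hmem
        rw [List.get_eq_getElem] at hcb
        have hceq : c = b.1 := (hnd.getElem_inj_iff).mp hcb
        have hc' : c < j := ((by simpa using hc : c < j ∧ c < L.length)).1
        rw [hceq] at hc'
        exact absurd hc' (not_lt.mpr hbj'.le)
end

section
/- If G is connected with at least 3 vertices and π is a layout of G, then for every index i with mid(π_{≤ i−1}) ∩ endpoints(π(i)) = ∅, we have d(π_{≤ i−1}) < d(π_{≤ i}); in particular at least one endpoint of π(i) has degree more than one in G. -/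
variable {V : Type*} [Fintype V] [DecidableEq V]

lemma stuck {G : SimpleGraph V} {a b : V} (ha : G.neighborSet a ⊆ {b})
    (hb : G.neighborSet b ⊆ {a}) {x y : V} (p : G.Walk x y)
    (hx : x = a ∨ x = b) : y = a ∨ y = b := by
  induction p with
  | nil => exact hx
  | @cons x c y h p ih =>
    apply ih
    rcases hx with rfl | rfl
    · right; exact ha h
    · left; exact hb h

lemma deg_gt {G : SimpleGraph V} [DecidableRel G.Adj] (hG : G.Connected)
    (h3 : 3 ≤ Fintype.card V) {e : Sym2 V} (he : e ∈ G.edgeSet) :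
    ∃ u ∈ eset e, 1 < G.degree u := by
  induction e with
  | h a b =>
    simp only [SimpleGraph.mem_edgeSet] at he
    by_contra hcon
    push_neg at hcon
    have ha1 : G.degree a = 1 := le_antisymm (hcon a (by simp [mem_eset]))
      (SimpleGraph.degree_pos_iff_exists_adj G a |>.mpr ⟨b, he⟩)
    have hb1 : G.degree b = 1 := le_antisymm (hcon b (by simp [mem_eset]))
      (SimpleGraph.degree_pos_iff_exists_adj G b |>.mpr ⟨a, he.symm⟩)
    have hna : G.neighborFinset a = {b} := by
      obtain ⟨c, hc⟩ := Finset.card_eq_one.mp ha1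
      rw [hc]
      have : b ∈ G.neighborFinset a := by simp [he]
      rw [hc] at this; simp at this; simp [this]
    have hnb : G.neighborFinset b = {a} := by
      obtain ⟨c, hc⟩ := Finset.card_eq_one.mp hb1
      rw [hc]
      have : a ∈ G.neighborFinset b := by simp [he.symm]
      rw [hc] at this; simp at this; simp [this]
    have hsa : G.neighborSet a ⊆ {b} := by
      intro x hx
      have : x ∈ G.neighborFinset a := by simpa using hx
      rw [hna] at this; simpa using this
    have hsb : G.neighborSet b ⊆ {a} := by
      intro x hx
      have : x ∈ G.neighborFinset b := by simpa using hx
      rw [hnb] at this; simpa using this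
    have hw : ∃ w : V, w ≠ a ∧ w ≠ b := by
      by_contra hw
      push_neg at hw
      have hsub : (Finset.univ : Finset V) ⊆ {a, b} := by
        intro x _
        by_cases hxa : x = a
        · simp [hxa]
        · simp [hw x hxa]
      have := Finset.card_le_card hsub
      rw [Finset.card_univ] at this
      have h2 : ({a, b} : Finset V).card ≤ 2 := Finset.card_insert_le _ _ |>.trans (by simp)
      omega
    obtain ⟨w, hwa, hwb⟩ := hw
    obtain ⟨p⟩ := (hG.preconnected a w)
    rcases stuck hsa hsb p (Or.inl rfl) with h | h
    · exact hwa h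
    · exact hwb h

/-- If G is connected with ≥ 3 vertices and mid(π_{≤ i−1}) ∩ endpoints(π(i)) = ∅,
then d(π_{≤ i−1}) < d(π_{≤ i}); in particular some endpoint of π(i) has degree > 1. -/
theorem stmt10 (G : SimpleGraph V) [DecidableRel G.Adj] (hG : G.Connected)
    (h3 : 3 ≤ Fintype.card V) (L : List (Sym2 V)) (hL : IsLayout G.edgeFinset L)
    (i : Fin L.length)
    (hdisj : mids G.edgeFinset (L.take i).toFinset ∩ eset (L.get i) = ∅) :
    dd G.edgeFinset (L.take i).toFinset <
      dd G.edgeFinset (L.take (i + 1)).toFinset ∧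
    ∃ u ∈ eset (L.get i), 1 < G.degree u := by
  set E := G.edgeFinset with hE
  set F := (L.take i).toFinset with hF
  set e := L.get i with he
  have heE : e ∈ E := by
    rw [← hL.2]; exact List.mem_toFinset.mpr (L.get_mem i)
  have heF : e ∉ F := by
    intro hmem
    have hnd := hL.1
    have hsplit : L.take i ++ L.drop i = L := List.take_append_drop _ _
    have hnd2 : (L.take i ++ L.drop i).Nodup := by rw [hsplit]; exact hnd
    have hdisj' := List.disjoint_of_nodup_append hnd2
    have hmem' : e ∈ L.take (i : ℕ) := List.mem_toFinset.mp hmem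
    have hd : e ∈ L.drop (i : ℕ) := by
      have h0 : 0 < (L.drop (i : ℕ)).length := by
        rw [List.length_drop]; omega
      have : (L.drop (i : ℕ))[0] = L[(i : ℕ)] := by
        simp [List.getElem_drop]
      rw [he]
      have := List.getElem_mem h0
      rw [‹(L.drop (i : ℕ))[0] = L[(i : ℕ)]›] at this
      simpa using this
    exact hdisj' hmem' hd
  have hF' : (L.take ((i : ℕ) + 1)).toFinset = insert e F := by
    rw [List.take_succ]
    have : L[(i : ℕ)]? = some e := by
      rw [he, List.getElem?_eq_getElem i.isLt]; rfl
    rw [this]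
    simp only [List.toFinset_append, Option.toList_some, List.toFinset_cons, List.toFinset_nil, LawfulSingleton.insert_empty_eq, hF]
    exact Finset.union_comm _ _ |>.trans rfl |>.trans (by rw [Finset.insert_eq])
  have heset : e ∈ G.edgeSet := SimpleGraph.mem_edgeFinset.mp heE
  obtain ⟨u, hu, hdeg⟩ := deg_gt hG h3 heset
  refine ⟨?_, u, hu, hdeg⟩
  have hdisj2 : ∀ v, v ∈ mids E F → v ∈ eset e → False := by
    intro v h1 h2
    have : v ∈ mids E F ∩ eset e := Finset.mem_inter.mpr ⟨h1, h2⟩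
    rw [hdisj] at this
    exact Finset.notMem_empty v this
  have hsub : mids E F ⊆ mids E (insert e F) := by
    intro v hv
    obtain ⟨hv1, hv2⟩ := Finset.mem_inter.mp hv
    refine Finset.mem_inter.mpr ⟨?_, ?_⟩
    · rw [mem_Vs] at hv1 ⊢
      obtain ⟨f, hf, hvf⟩ := hv1
      exact ⟨f, Finset.mem_insert_of_mem hf, hvf⟩
    · rw [mem_Vs] at hv2 ⊢
      obtain ⟨f, hf, hvf⟩ := hv2
      obtain ⟨hfE, hfF⟩ := Finset.mem_sdiff.mp hf
      by_cases hfe : f = e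
      · exact absurd (mem_eset.mpr (hfe ▸ hvf)) (fun h => hdisj2 v hv h)
      · exact ⟨f, Finset.mem_sdiff.mpr ⟨hfE, by simp [hfe, hfF]⟩, hvf⟩
  -- u has another edge f ≠ e
  have hue : u ∈ e := mem_eset.mp hu
  have hf : ∃ f ∈ E, u ∈ f ∧ f ≠ e := by
    have h2 : 1 < (G.neighborFinset u).card := hdeg
    obtain ⟨c₁, hc₁, c₂, hc₂, hne⟩ := Finset.one_lt_card.mp h2
    rw [SimpleGraph.mem_neighborFinset] at hc₁ hc₂
    by_cases h1 : s(u, c₁) = e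
    · refine ⟨s(u, c₂), ?_, by simp, ?_⟩
      · rw [hE, SimpleGraph.mem_edgeFinset]; exact hc₂
      · intro h2'
        rw [← h1] at h2'
        exact hne (by simpa using (Sym2.congr_right.mp h2'.symm))
    · exact ⟨s(u, c₁), by rw [hE, SimpleGraph.mem_edgeFinset]; exact hc₁, by simp, h1⟩
  obtain ⟨f, hfE, huf, hfe⟩ := hf
  have hfF : f ∉ F := by
    intro hmem
    apply hdisj2 u _ hu
    refine Finset.mem_inter.mpr ⟨mem_Vs.mpr ⟨f, hmem, huf⟩, mem_Vs.mpr ⟨e, ?_, hue⟩⟩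
    exact Finset.mem_sdiff.mpr ⟨heE, heF⟩
  have humem : u ∈ mids E (insert e F) := by
    refine Finset.mem_inter.mpr ⟨mem_Vs.mpr ⟨e, Finset.mem_insert_self e F, hue⟩, ?_⟩
    exact mem_Vs.mpr ⟨f, Finset.mem_sdiff.mpr ⟨hfE, by simp [hfe, hfF]⟩, huf⟩
  have hunot : u ∉ mids E F := fun h => hdisj2 u h hu
  rw [dd, dd, hF']
  exact Finset.card_lt_card ((Finset.ssubset_iff_of_subset hsub).mpr ⟨u, humem, hunot⟩)
end

section
/- For every graph G and every k, G has a layout of width at most k if and only if the empty partial layout is k-extendable; equivalently, lw(G) ≤ k iff for every closed set F reached by repeatedly adding edges e with d(F ∪ {e}) ≤ k and taking closures starting from ∅, eventually F = E is reached. -/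
variable {V : Type*} [Fintype V] [DecidableEq V]

lemma Vs_mono {F G : Finset (Sym2 V)} (h : F ⊆ G) : Vs F ⊆ Vs G := by
  intro v hv; rw [mem_Vs] at *; obtain ⟨e, he, hve⟩ := hv; exact ⟨e, h he, hve⟩

lemma Vs_subset_of_esets {F : Finset (Sym2 V)} {W : Finset V}
    (h : ∀ e ∈ F, eset e ⊆ W) : Vs F ⊆ W := by
  intro v hv; rw [mem_Vs] at hv; obtain ⟨e, he, hve⟩ := hv
  exact h e he (mem_eset.2 hve)

lemma dd_le_of_subset {E A S : Finset (Sym2 V)} (h1 : A ⊆ S) (h2 : Vs S ⊆ Vs A) :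
    dd E S ≤ dd E A := by
  apply Finset.card_le_card
  intro v hv
  simp only [mids, Finset.mem_inter] at hv ⊢
  exact ⟨h2 hv.1, Vs_mono (Finset.sdiff_subset_sdiff (Finset.Subset.refl E) h1) hv.2⟩

lemma cl_subset (E F : Finset (Sym2 V)) : cl E F ⊆ E := Finset.filter_subset _ _

lemma subset_cl {E F : Finset (Sym2 V)} (h : F ⊆ E) : F ⊆ cl E F := by
  intro e he
  simp only [cl, Finset.mem_filter]
  exact ⟨h he, fun v hv => mem_Vs.2 ⟨e, he, mem_eset.1 hv⟩⟩

lemma Vs_cl {E F : Finset (Sym2 V)} (h : F ⊆ E) : Vs (cl E F) = Vs F :=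
  Finset.Subset.antisymm
    (Vs_subset_of_esets (fun _ he => (Finset.mem_filter.1 he).2))
    (Vs_mono (subset_cl h))

lemma cl_congr {E A B : Finset (Sym2 V)} (h : Vs A = Vs B) : cl E A = cl E B := by
  simp [cl, h]

lemma Vs_insert (e : Sym2 V) (F : Finset (Sym2 V)) :
    Vs (insert e F) = eset e ∪ Vs F := by
  ext v
  simp only [mem_Vs, Finset.mem_insert, Finset.mem_union, mem_eset]
  constructor
  · rintro ⟨f, (rfl | hf), hv⟩
    · exact Or.inl hv
    · exact Or.inr ⟨f, hf, hv⟩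
  · rintro (hv | ⟨f, hf, hv⟩)
    · exact ⟨e, Or.inl rfl, hv⟩
    · exact ⟨f, Or.inr hf, hv⟩

lemma cl_self (E : Finset (Sym2 V)) : cl E E = E :=
  Finset.Subset.antisymm (cl_subset E E) (subset_cl (Finset.Subset.refl E))

lemma cl_empty (E : Finset (Sym2 V)) : cl E (∅ : Finset (Sym2 V)) = ∅ := by
  ext e
  simp only [cl, Finset.mem_filter, Finset.notMem_empty, iff_false, not_and]
  intro _ hsub
  have h1 : e.out.1 ∈ eset e := mem_eset.2 (Sym2.out_fst_mem e)
  have := hsub h1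
  rw [mem_Vs] at this
  obtain ⟨f, hf, -⟩ := this
  exact absurd hf (Finset.notMem_empty f)

lemma fwd {E : Finset (Sym2 V)} {k : ℕ} {L : List (Sym2 V)}
    (hL : IsLayout E L) (hW : WidthLE E L k) :
    Relation.ReflTransGen
      (fun F Fp : Finset (Sym2 V) =>
        ∃ e ∈ E \ F, dd E (insert e F) ≤ k ∧ Fp = cl E (insert e F)) ∅ E := by
  have hEsub : ∀ i, (L.take i).toFinset ⊆ E := by
    intro i
    rw [← hL.2]
    intro e he
    exact List.mem_toFinset.2 (List.mem_of_mem_take (List.mem_toFinset.1 he))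
  have key : ∀ i, Relation.ReflTransGen
      (fun F Fp : Finset (Sym2 V) =>
        ∃ e ∈ E \ F, dd E (insert e F) ≤ k ∧ Fp = cl E (insert e F))
      ∅ (cl E (L.take i).toFinset) := by
    intro i
    induction i with
    | zero =>
      simp only [List.take_zero, List.toFinset_nil, cl_empty]
      exact Relation.ReflTransGen.refl
    | succ i ih =>
      by_cases hi : i < L.length
      · set e := L.get ⟨i, hi⟩ with he_def
        have htake : L.take (i+1) = L.take i ++ [e] := by
          rw [List.take_succ, List.getElem?_eq_getElem hi]
          rfl
        have hP' : (L.take (i+1)).toFinset = insert e (L.take i).toFinset := by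
          rw [htake]
          ext a
          simp only [List.toFinset_append, List.toFinset_cons, List.toFinset_nil,
            Finset.mem_union, Finset.mem_insert, Finset.notMem_empty, or_false]
          tauto
        by_cases hcl : e ∈ cl E (L.take i).toFinset
        · have hes : eset e ⊆ Vs (L.take i).toFinset := (Finset.mem_filter.1 hcl).2
          have hVeq : Vs (L.take (i+1)).toFinset = Vs (L.take i).toFinset := by
            rw [hP', Vs_insert]
            exact Finset.union_eq_right.2 hes
          rw [cl_congr hVeq]
          exact ih
        · apply Relation.ReflTransGen.tail ih
          have heE : e ∈ E := by
            rw [← hL.2]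
            exact List.mem_toFinset.2 (List.get_mem L ⟨i, hi⟩)
          have hVeq : Vs (insert e (cl E (L.take i).toFinset)) = Vs (L.take (i+1)).toFinset := by
            rw [hP', Vs_insert, Vs_insert, Vs_cl (hEsub i)]
          refine ⟨e, Finset.mem_sdiff.2 ⟨heE, hcl⟩, ?_, ?_⟩
          · calc dd E (insert e (cl E (L.take i).toFinset))
                ≤ dd E (L.take (i+1)).toFinset := by
                  apply dd_le_of_subset
                  · rw [hP']
                    exact Finset.insert_subset_insert e (subset_cl (hEsub i))
                  · rw [hVeq]
              _ ≤ k := hW (i+1)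
          · exact (cl_congr hVeq).symm
      · push_neg at hi
        have h1 : L.take (i+1) = L.take i := by
          rw [List.take_of_length_le hi, List.take_of_length_le (Nat.le_succ_of_le hi)]
        rw [h1]
        exact ih
  have := key L.length
  rwa [List.take_length, hL.2, cl_self] at this

lemma bwd {E : Finset (Sym2 V)} {k : ℕ} {F : Finset (Sym2 V)}
    (h : Relation.ReflTransGen
      (fun F Fp : Finset (Sym2 V) =>
        ∃ e ∈ E \ F, dd E (insert e F) ≤ k ∧ Fp = cl E (insert e F)) F E) :
    ∀ L0 : List (Sym2 V), L0.Nodup → L0.toFinset = F → F ⊆ E → WidthLE E L0 k →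
      ∃ L, IsLayout E L ∧ WidthLE E L k ∧ L0 <+: L := by
  induction h using Relation.ReflTransGen.head_induction_on with
  | refl =>
    intro L0 hnd htf _ hw
    exact ⟨L0, ⟨hnd, htf⟩, hw, List.prefix_refl L0⟩
  | head hstep _ ih =>
    rename_i F F' _
    intro L0 hnd htf hFE hw
    obtain ⟨e, he, hdd, rfl⟩ := hstep
    rw [Finset.mem_sdiff] at he
    have hiE : insert e F ⊆ E := Finset.insert_subset he.1 hFE
    have hsub : insert e F ⊆ cl E (insert e F) := subset_cl hiE
    have hVs : Vs (cl E (insert e F)) = Vs (insert e F) := Vs_cl hiE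
    set T := cl E (insert e F) \ insert e F with hT
    set L1 := L0 ++ e :: T.toList with hL1
    have hTm : ∀ a, a ∈ T.toList ↔ (a ∈ cl E (insert e F) ∧ ¬(a = e ∨ a ∈ F)) := by
      intro a
      rw [Finset.mem_toList, hT, Finset.mem_sdiff, Finset.mem_insert]
    have htf1 : L1.toFinset = cl E (insert e F) := by
      ext a
      simp only [hL1, List.toFinset_append, List.toFinset_cons, Finset.mem_union,
        Finset.mem_insert, List.mem_toFinset, htf, hTm]
      constructor
      · rintro (ha | rfl | ⟨ha, -⟩)
        · exact hsub (Finset.mem_insert_of_mem ha)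
        · exact hsub (Finset.mem_insert_self _ _)
        · exact ha
      · intro ha
        by_cases h1 : a = e
        · exact Or.inr (Or.inl h1)
        · by_cases h2 : a ∈ F
          · exact Or.inl h2
          · exact Or.inr (Or.inr ⟨ha, by tauto⟩)
    have hnd1 : L1.Nodup := by
      rw [hL1, List.nodup_append]
      refine ⟨hnd, ?_, ?_⟩
      · rw [List.nodup_cons]
        refine ⟨fun hc => ?_, Finset.nodup_toList T⟩
        exact ((hTm e).1 hc).2 (Or.inl rfl)
      · intro a haL0 b hac hab
        rw [← hab] at hac
        have haF : a ∈ F := htf ▸ List.mem_toFinset.2 haL0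
        rcases List.mem_cons.1 hac with rfl | haT
        · exact he.2 haF
        · exact ((hTm a).1 haT).2 (Or.inr haF)
    have hw1 : WidthLE E L1 k := by
      intro i
      rcases le_or_gt i L0.length with hi | hi
      · have : L1.take i = L0.take i := by
          rw [hL1, List.take_append, Nat.sub_eq_zero_of_le hi,
            List.take_zero, List.append_nil]
        rw [this]
        exact hw i
      · have hins : insert e F ⊆ (L1.take i).toFinset := by
          intro a ha
          rw [List.mem_toFinset, hL1, List.take_append,
            List.take_of_length_le (le_of_lt hi), List.mem_append]
          rcases Finset.mem_insert.1 ha with rfl | haF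
          · right
            obtain ⟨m, hm⟩ := Nat.exists_eq_add_of_lt hi
            have : i - L0.length = m + 1 := by omega
            rw [this, List.take_succ_cons]
            exact List.mem_cons_self
          · exact Or.inl (List.mem_toFinset.1 (htf ▸ haF))
        have hsub2 : (L1.take i).toFinset ⊆ cl E (insert e F) := by
          rw [← htf1]
          intro a ha
          exact List.mem_toFinset.2 (List.mem_of_mem_take (List.mem_toFinset.1 ha))
        calc dd E (L1.take i).toFinset
            ≤ dd E (insert e F) :=
              dd_le_of_subset hins ((Vs_mono hsub2).trans (le_of_eq hVs))
          _ ≤ k := hdd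
    obtain ⟨L, hL, hWL, hpre⟩ := ih L1 hnd1 htf1 (cl_subset _ _) hw1
    exact ⟨L, hL, hWL, (List.prefix_append L0 (e :: T.toList)).trans hpre⟩


lemma lw_le_iff {E : Finset (Sym2 V)} {k : ℕ} :
    lw E ≤ k ↔ ∃ L, IsLayout E L ∧ WidthLE E L k := by
  constructor
  · intro h
    have hne : {k | ∃ L, IsLayout E L ∧ WidthLE E L k}.Nonempty := by
      refine ⟨Fintype.card V, E.toList, ⟨E.nodup_toList, E.toList_toFinset⟩, fun i => ?_⟩
      exact Finset.card_le_univ _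
    obtain ⟨L, h1, h2⟩ := Nat.sInf_mem hne
    exact ⟨L, h1, fun i => (h2 i).trans h⟩
  · rintro ⟨L, h1, h2⟩
    exact Nat.sInf_le ⟨L, h1, h2⟩

/-- G has a layout of width ≤ k iff the empty partial layout is k-extendable;
equivalently, lw(G) ≤ k iff E is reachable from ∅ by repeatedly adding an edge e
with d(F ∪ {e}) ≤ k and taking closures. -/
theorem stmt19 (E : Finset (Sym2 V)) (k : ℕ) :
    ((∃ L, IsLayout E L ∧ WidthLE E L k) ↔ Extendable E k ([] : List (Sym2 V))) ∧
    (lw E ≤ k ↔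
      Relation.ReflTransGen
        (fun F Fp : Finset (Sym2 V) =>
          ∃ e ∈ E \ F, dd E (insert e F) ≤ k ∧ Fp = cl E (insert e F))
        ∅ E) := by
  constructor
  · constructor
    · rintro ⟨L, h1, h2⟩
      exact ⟨L, h1, h2, List.nil_prefix⟩
    · rintro ⟨L, h1, h2, -⟩
      exact ⟨L, h1, h2⟩
  · rw [lw_le_iff]
    constructor
    · rintro ⟨L, h1, h2⟩
      exact fwd h1 h2
    · intro h
      have hh := bwd h [] List.nodup_nil rfl (Finset.empty_subset E) (fun i => ?_)
      · obtain ⟨L, h1, h2, -⟩ := hh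
        exact ⟨L, h1, h2⟩
      simp only [List.take_nil, List.toFinset_nil]
      have : mids E (∅ : Finset (Sym2 V)) ⊆ Vs (∅ : Finset (Sym2 V)) :=
        Finset.inter_subset_left
      have h0 : Vs (∅ : Finset (Sym2 V)) = (∅ : Finset V) := by
        ext v; simp [mem_Vs]
      rw [dd]
      calc (mids E (∅ : Finset (Sym2 V))).card ≤ (Vs (∅ : Finset (Sym2 V))).card :=
            Finset.card_le_card this
        _ = 0 := by rw [h0, Finset.card_empty]
        _ ≤ k := Nat.zero_le k
end
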